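/- Let M = [0,1] with the Euclidean metric, let k > 1 be a real number, and define T : M → M by T(x) = x/k. Then T is a Kannan type perimetric contraction on quadrilaterals if and only if k > 5. -/

import Mathlib

theorem kannan_perimetric_quadrilaterals_div_iff
    (k : ℝ) (hk : 1 < k)
    (T : Set.Icc (0:ℝ) 1 → Set.Icc (0:ℝ) 1)
    (hT : ∀ x : Set.Icc (0:ℝ) 1, (T x : ℝ) = (x : ℝ) / k) :
    (∃ δ : ℝ, 0 ≤ δ ∧ δ < 1/2 ∧ ∀ p q r s : Set.Icc (0:ℝ) 1,
      p ≠ q → p ≠ r → p ≠ s → q ≠ r → q ≠ s → r ≠ s →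
      dist (T p) (T q) + dist (T q) (T r) + dist (T r) (T s) + dist (T s) (T p) ≤
        δ * (dist p (T p) + dist q (T q) + dist r (T r) + dist s (T s))) ↔ 5 < k := by
  have hk0 : (0:ℝ) < k := lt_trans one_pos hk
  have hk1 : (0:ℝ) < k - 1 := by linarith
  have key : ∀ x y : Set.Icc (0:ℝ) 1, (y:ℝ) ≤ (x:ℝ) →
      dist (T x) (T y) = ((x:ℝ) - (y:ℝ)) / k := by
    intro x y hxy
    rw [Subtype.dist_eq, Real.dist_eq, hT, hT, ← sub_div,
      abs_of_nonneg (div_nonneg (by linarith) hk0.le)]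
  have hfix : ∀ x : Set.Icc (0:ℝ) 1, dist x (T x) = (x:ℝ) * (k - 1) / k := by
    intro x
    have hx0 : (0:ℝ) ≤ (x:ℝ) := x.2.1
    rw [Subtype.dist_eq, Real.dist_eq, hT]
    have : (x:ℝ) - (x:ℝ)/k = (x:ℝ) * (k-1)/k := by field_simp
    rw [this, abs_of_nonneg (by positivity)]
  constructor
  · rintro ⟨δ, hδ0, hδ2, h⟩
    by_contra hk5
    push_neg at hk5
    set c := 2 * δ * (k - 1) with hc
    have hc4 : c < 4 := by nlinarith
    have hc0 : 0 ≤ c := by positivity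
    set ε := (4 - c) / 9 with hε
    have hε0 : 0 < ε := by rw [hε]; linarith
    have hεlt : ε < 1/2 := by rw [hε]; linarith
    have hmem1 : (1:ℝ) ∈ Set.Icc (0:ℝ) 1 := by constructor <;> norm_num
    have hmem0 : (0:ℝ) ∈ Set.Icc (0:ℝ) 1 := by constructor <;> norm_num
    have hmem2 : (1 - ε) ∈ Set.Icc (0:ℝ) 1 := by constructor <;> linarith
    have hmem3 : ε ∈ Set.Icc (0:ℝ) 1 := by constructor <;> linarith
    set p : Set.Icc (0:ℝ) 1 := ⟨1, hmem1⟩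
    set q : Set.Icc (0:ℝ) 1 := ⟨0, hmem0⟩
    set r : Set.Icc (0:ℝ) 1 := ⟨1 - ε, hmem2⟩
    set s : Set.Icc (0:ℝ) 1 := ⟨ε, hmem3⟩
    have hne : ∀ a b : Set.Icc (0:ℝ) 1, (a:ℝ) ≠ (b:ℝ) → a ≠ b := by
      intro a b hab heq; exact hab (congrArg Subtype.val heq)
    have H := h p q r s
      (hne _ _ (by norm_num)) (hne _ _ (by simp only [p, q, r, s]; norm_num; linarith))
      (hne _ _ (by simp only [p, q, r, s]; norm_num; linarith))
      (hne _ _ (by simp only [p, q, r, s]; norm_num; linarith))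
      (hne _ _ (by simp only [p, q, r, s]; norm_num; linarith))
      (hne _ _ (by simp only [p, q, r, s]; norm_num; linarith))
    rw [key p q (by norm_num), dist_comm (T q) (T r), key r q (by simp only [p, q, r, s]; linarith),
      key r s (by simp only [p, q, r, s]; linarith), dist_comm (T s) (T p),
      key p s (by simp only [p, q, r, s]; linarith), hfix, hfix, hfix, hfix] at H
    simp only [p, q, r, s] at H
    have hkne : k ≠ 0 := ne_of_gt hk0
    have H' := H
    field_simp at H'
    have Hk : (4 - 4*ε) ≤ δ * (2 * (k - 1)) := by nlinarith [H']
    rw [hε] at Hk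
    nlinarith [Hk]
  · intro hk5
    refine ⟨2 / (k - 1), by positivity, by rw [div_lt_iff₀ hk1]; linarith, ?_⟩
    intro p q r s _ _ _ _ _ _
    have habs : ∀ x y : Set.Icc (0:ℝ) 1, dist (T x) (T y) ≤ ((x:ℝ) + (y:ℝ))/k := by
      intro x y
      rw [Subtype.dist_eq, Real.dist_eq, hT, hT, ← sub_div, abs_div, abs_of_pos hk0]
      gcongr
      exact (abs_sub _ _).trans (by rw [abs_of_nonneg x.2.1, abs_of_nonneg y.2.1])
    rw [hfix, hfix, hfix, hfix]
    have hRHS : 2 / (k-1) * ((p:ℝ) * (k-1)/k + (q:ℝ) * (k-1)/k + (r:ℝ) * (k-1)/k + (s:ℝ) * (k-1)/k)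
        = 2 * ((p:ℝ) + q + r + s) / k := by
      field_simp
    rw [hRHS]
    calc dist (T p) (T q) + dist (T q) (T r) + dist (T r) (T s) + dist (T s) (T p)
        ≤ ((p:ℝ)+q)/k + ((q:ℝ)+r)/k + ((r:ℝ)+s)/k + ((s:ℝ)+p)/k := by
          gcongr <;> [exact habs p q; exact habs q r; exact habs r s; exact habs s p]
      _ = 2 * ((p:ℝ) + q + r + s) / k := by ring
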